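/- Let d ≥ 5 and let ξ : ℤ^d → ℝ be square-summable with |ξ_x| ≤ 1/2 for all x, where Δ is the Laplacian of the nearest-neighbor graph on ℤ^d. If ν = Δξ is integer-valued and nonzero at at least three distinct points (i.e., |supp ν| ≥ 3), then Σ_{x∈ℤ^d} ξ_x² ≥ 3/(4d² + 10d). -/

import Mathlib

/-- The graph Laplacian of the nearest-neighbor lattice `ℤ^d`. -/
noncomputable def zdLap (d : ℕ) (f : (Fin d → ℤ) → ℝ) (v : Fin d → ℤ) : ℝ :=
  2 * d * f v - ∑ i : Fin d, (f (v + Pi.single i 1) + f (v - Pi.single i 1))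

section Aux

variable {d : ℕ}

private def par (v : Fin d → ℤ) : ℤ := ∑ i, v i

private lemma par_add_single (v : Fin d → ℤ) (j : Fin d) (s : ℤ) :
    par (v + Pi.single j s) = par v + s := by
  unfold par
  simp only [Pi.add_apply]
  rw [Finset.sum_add_distrib]
  congr 1
  simp [Pi.single_apply, Finset.sum_ite_eq']

private lemma sub_single (v : Fin d → ℤ) (j : Fin d) :
    v - Pi.single j 1 = v + Pi.single j (-1) := by
  funext i
  simp [Pi.single_apply]
  split <;> ring

private lemma single_inj {j k : Fin d} {s t : ℤ} (hs : s ≠ 0)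
    (h : (Pi.single j s : Fin d → ℤ) = Pi.single k t) : j = k ∧ s = t := by
  have hj := congrFun h j
  by_cases hjk : j = k
  · subst hjk; simpa using hj
  · simp [Pi.single_apply, hjk] at hj
    exact absurd hj hs

/-- The "indicator of neighbor" counting function. -/
private noncomputable def cfun (z w : Fin d → ℤ) : ℝ :=
  (if w = z then (2*(d:ℝ)) else 0) +
    ∑ j : Fin d, ((if w = z + Pi.single j 1 then 1 else 0) +
      (if w = z - Pi.single j 1 then 1 else 0))

/-- Uniqueness: there is at most one pair (j, ±) with x = z ± e_j. -/
private lemma nsum_le_one (z x : Fin d → ℤ) :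
    (∑ j : Fin d, ((if x = z + Pi.single j 1 then (1:ℝ) else 0) +
      (if x = z - Pi.single j 1 then 1 else 0))) ≤ 1 := by
  by_cases hex : ∃ (j : Fin d) (s : ℤ), s ≠ 0 ∧ x = z + Pi.single j s
  · obtain ⟨j₀, s₀, hs₀, hx⟩ := hex
    calc (∑ j : Fin d, ((if x = z + Pi.single j 1 then (1:ℝ) else 0) +
          (if x = z - Pi.single j 1 then 1 else 0)))
        ≤ ∑ j : Fin d, (if j = j₀ then (1:ℝ) else 0) := by
          apply Finset.sum_le_sum
          intro j _
          by_cases hj : j = j₀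
          · subst hj
            have hnot : ¬ (x = z + Pi.single j 1 ∧ x = z - Pi.single j 1) := by
              rintro ⟨h1, h2⟩
              rw [sub_single] at h2
              have := add_left_cancel (h1.symm.trans h2)
              have := (single_inj (by norm_num) this).2
              norm_num at this
            split_ifs with p q <;> simp_all <;> norm_num
          · have e1 : x ≠ z + Pi.single j 1 := by
              intro h
              rw [hx] at h
              have := (single_inj hs₀ (add_left_cancel h)).1
              exact hj this.symm
            have e2 : x ≠ z - Pi.single j 1 := by
              intro h
              rw [sub_single, hx] at h
              have := (single_inj hs₀ (add_left_cancel h)).1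
              exact hj this.symm
            simp [e1, e2, hj]
      _ = 1 := by simp
  · push_neg at hex
    have : ∀ j : Fin d, ((if x = z + Pi.single j 1 then (1:ℝ) else 0) +
        (if x = z - Pi.single j 1 then 1 else 0)) = 0 := by
      intro j
      have e1 : x ≠ z + Pi.single j 1 := fun h => hex j 1 (by norm_num) h
      have e2 : x ≠ z - Pi.single j 1 := fun h => hex j (-1) (by norm_num) (by rwa [sub_single] at h)
      simp [e1, e2]
    simp [this]

/-- Parity: if `par x - par z` is even, the neighbor count is zero. -/
private lemma nsum_eq_zero (z x : Fin d → ℤ) (h : Even (par x - par z)) :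
    (∑ j : Fin d, ((if x = z + Pi.single j 1 then (1:ℝ) else 0) +
      (if x = z - Pi.single j 1 then 1 else 0))) = 0 := by
  have key : ∀ (j : Fin d) (s : ℤ), Odd s → x ≠ z + Pi.single j s := by
    intro j s hs hxz
    rw [hxz, par_add_single] at h
    simp only [add_sub_cancel_left] at h
    exact (Int.not_even_iff_odd.mpr hs) h
  apply Finset.sum_eq_zero
  intro j _
  have e1 := key j 1 ⟨0, by ring⟩
  have e2 : x ≠ z - Pi.single j 1 := by
    rw [sub_single]; exact key j (-1) ⟨-1, by ring⟩
  simp [e1, e2]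

private lemma cfun_nonneg (z w : Fin d → ℤ) : 0 ≤ cfun z w := by
  unfold cfun
  have h1 : (0:ℝ) ≤ (if w = z then 2*(d:ℝ) else 0) := by positivity
  have h2 : (0:ℝ) ≤ ∑ j : Fin d, ((if w = z + Pi.single j 1 then (1:ℝ) else 0) +
      (if w = z - Pi.single j 1 then 1 else 0)) := by
    apply Finset.sum_nonneg; intro j _; positivity
  linarith

private lemma cfun_le_one {z x : Fin d → ℤ} (h : x ≠ z) : cfun z x ≤ 1 := by
  unfold cfun
  have := nsum_le_one z x
  simp [h]
  linarith

private lemma cfun_self (z : Fin d → ℤ) : cfun z z ≤ 2*d := by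
  unfold cfun
  have h0 := nsum_eq_zero z z (by simp)
  rw [h0, add_zero]
  simp

private lemma cfun_eq_zero {z x : Fin d → ℤ} (h : x ≠ z) (he : Even (par x - par z)) :
    cfun z x = 0 := by
  unfold cfun
  rw [nsum_eq_zero z x he, if_neg h, add_zero]

private lemma cfun_even {z x : Fin d → ℤ} (he : Even (par x - par z)) :
    cfun z x = (if x = z then 2*(d:ℝ) else 0) := by
  unfold cfun
  rw [nsum_eq_zero z x he, add_zero]

/-- Pairing lemma: summing `cfun z w * g w` over a set containing the ball. -/
private lemma pairing {S : Finset (Fin d → ℤ)} {z : Fin d → ℤ}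
    (hz : z ∈ S) (hp : ∀ j, z + Pi.single j 1 ∈ S) (hm : ∀ j, z - Pi.single j 1 ∈ S)
    (g : (Fin d → ℤ) → ℝ) :
    ∑ w ∈ S, cfun z w * g w
      = 2*d * g z + ∑ j : Fin d, (g (z + Pi.single j 1) + g (z - Pi.single j 1)) := by
  unfold cfun
  simp only [add_mul, Finset.sum_mul, ite_mul, zero_mul, one_mul]
  rw [Finset.sum_add_distrib]
  congr 1
  · rw [Finset.sum_ite_eq' S z (fun w => 2*(d:ℝ)*g w), if_pos hz]
  · rw [Finset.sum_comm]
    apply Finset.sum_congr rfl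
    intro j _
    rw [Finset.sum_add_distrib,
      Finset.sum_ite_eq' S (z + Pi.single j 1) (fun w => g w), if_pos (hp j),
      Finset.sum_ite_eq' S (z - Pi.single j 1) (fun w => g w), if_pos (hm j)]

end Aux

theorem zd_three_point_support_two_norm (d : ℕ) (hd : 5 ≤ d)
    (ξ : (Fin d → ℤ) → ℝ)
    (hsum : Summable (fun x => ξ x ^ 2)) (hbdd : ∀ x, |ξ x| ≤ 1 / 2)
    (hint : ∀ x, ∃ n : ℤ, zdLap d ξ x = n)
    (z₁ z₂ z₃ : Fin d → ℤ) (h12 : z₁ ≠ z₂) (h13 : z₁ ≠ z₃) (h23 : z₂ ≠ z₃)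
    (h₁ : zdLap d ξ z₁ ≠ 0) (h₂ : zdLap d ξ z₂ ≠ 0) (h₃ : zdLap d ξ z₃ ≠ 0) :
    3 / (4 * (d : ℝ) ^ 2 + 10 * d) ≤ ∑' x, ξ x ^ 2 := by
  classical
  -- the finite set of relevant points
  let ball : (Fin d → ℤ) → Finset (Fin d → ℤ) := fun z =>
    insert z ((Finset.univ : Finset (Fin d × Bool)).image
      (fun p => if p.2 then z + Pi.single p.1 1 else z - Pi.single p.1 1))
  let S : Finset (Fin d → ℤ) := ball z₁ ∪ ball z₂ ∪ ball z₃
  have hball : ∀ z, z ∈ ball z ∧ (∀ j, z + Pi.single j 1 ∈ ball z) ∧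
      (∀ j, z - Pi.single j 1 ∈ ball z) := by
    intro z
    refine ⟨Finset.mem_insert_self _ _, fun j => ?_, fun j => ?_⟩
    · exact Finset.mem_insert_of_mem (Finset.mem_image.mpr ⟨(j, true), Finset.mem_univ _, rfl⟩)
    · exact Finset.mem_insert_of_mem (Finset.mem_image.mpr ⟨(j, false), Finset.mem_univ _, rfl⟩)
  have hS1 : ball z₁ ⊆ S := by intro x hx; exact Finset.mem_union_left _ (Finset.mem_union_left _ hx)
  have hS2 : ball z₂ ⊆ S := by intro x hx; exact Finset.mem_union_left _ (Finset.mem_union_right _ hx)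
  have hS3 : ball z₃ ⊆ S := by intro x hx; exact Finset.mem_union_right _ hx
  have hmem : ∀ z, ball z ⊆ S → z ∈ S ∧ (∀ j, z + Pi.single j 1 ∈ S) ∧
      (∀ j, z - Pi.single j 1 ∈ S) := by
    intro z hsub
    obtain ⟨a, b, c⟩ := hball z
    exact ⟨hsub a, fun j => hsub (b j), fun j => hsub (c j)⟩
  obtain ⟨m1, p1, q1⟩ := hmem z₁ hS1
  obtain ⟨m2, p2, q2⟩ := hmem z₂ hS2
  obtain ⟨m3, p3, q3⟩ := hmem z₃ hS3
  -- the function u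
  set u : (Fin d → ℤ) → ℝ := fun w => cfun z₁ w + cfun z₂ w + cfun z₃ w with hu
  -- lower bound on the Laplacian at a support point
  have lap_ge : ∀ z : Fin d → ℤ, zdLap d ξ z ≠ 0 → (1:ℝ) ≤ |zdLap d ξ z| := by
    intro z hz
    obtain ⟨n, hn⟩ := hint z
    have hn0 : n ≠ 0 := by rintro rfl; simp at hn; exact hz hn
    rw [hn]
    rw [← Int.cast_abs]
    exact_mod_cast Int.one_le_abs hn0
  -- triangle inequality for the Laplacian
  have lap_le : ∀ z : Fin d → ℤ, |zdLap d ξ z| ≤ 2*d * |ξ z| +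
      ∑ j : Fin d, (|ξ (z + Pi.single j 1)| + |ξ (z - Pi.single j 1)|) := by
    intro z
    unfold zdLap
    calc |2 * ↑d * ξ z - ∑ i : Fin d, (ξ (z + Pi.single i 1) + ξ (z - Pi.single i 1))|
        ≤ |2 * ↑d * ξ z| + |∑ i : Fin d, (ξ (z + Pi.single i 1) + ξ (z - Pi.single i 1))| :=
          abs_sub _ _
      _ ≤ 2*d * |ξ z| + ∑ j : Fin d, (|ξ (z + Pi.single j 1)| + |ξ (z - Pi.single j 1)|) := by
          gcongr
          · rw [abs_mul]
            have : |2 * (d:ℝ)| = 2 * d := abs_of_nonneg (by positivity)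
            rw [this]
          · calc |∑ i : Fin d, (ξ (z + Pi.single i 1) + ξ (z - Pi.single i 1))|
                ≤ ∑ i : Fin d, |ξ (z + Pi.single i 1) + ξ (z - Pi.single i 1)| :=
                  Finset.abs_sum_le_sum_abs _ _
              _ ≤ ∑ j : Fin d, (|ξ (z + Pi.single j 1)| + |ξ (z - Pi.single j 1)|) := by
                  apply Finset.sum_le_sum; intro i _; exact abs_add_le _ _
  -- (1) lower bound for the pairing sum
  have pair_one : ∀ (z : Fin d → ℤ), z ∈ S → (∀ j, z + Pi.single j 1 ∈ S) →
      (∀ j, z - Pi.single j 1 ∈ S) → zdLap d ξ z ≠ 0 →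
      (1:ℝ) ≤ ∑ w ∈ S, cfun z w * |ξ w| := by
    intro z hz hp hm hnz
    rw [pairing hz hp hm (fun w => |ξ w|)]
    exact le_trans (lap_ge z hnz) (lap_le z)
  have step1 : (3:ℝ) ≤ ∑ w ∈ S, u w * |ξ w| := by
    have e : ∑ w ∈ S, u w * |ξ w| = (∑ w ∈ S, cfun z₁ w * |ξ w|) +
        (∑ w ∈ S, cfun z₂ w * |ξ w|) + (∑ w ∈ S, cfun z₃ w * |ξ w|) := by
      rw [← Finset.sum_add_distrib, ← Finset.sum_add_distrib]
      apply Finset.sum_congr rfl; intro w _; simp [hu]; ring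
    rw [e]
    have b1 := pair_one z₁ m1 p1 q1 h₁
    have b2 := pair_one z₂ m2 p2 q2 h₂
    have b3 := pair_one z₃ m3 p3 q3 h₃
    linarith
  -- (2) bound on the diagonal pairing
  have Pdiag : ∀ (z : Fin d → ℤ), z ∈ S → (∀ j, z + Pi.single j 1 ∈ S) →
      (∀ j, z - Pi.single j 1 ∈ S) →
      ∑ w ∈ S, cfun z w * cfun z w ≤ 4*(d:ℝ)^2 + 2*d := by
    intro z hz hp hm
    rw [pairing hz hp hm (cfun z)]
    have e1 : ∀ j : Fin d, cfun z (z + Pi.single j 1) ≤ 1 := by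
      intro j
      apply cfun_le_one
      intro h
      have := congrFun h j
      simp at this
    have e2 : ∀ j : Fin d, cfun z (z - Pi.single j 1) ≤ 1 := by
      intro j
      apply cfun_le_one
      rw [sub_single]
      intro h
      have := congrFun h j
      simp at this
    have hsum2 : ∑ j : Fin d, (cfun z (z + Pi.single j 1) + cfun z (z - Pi.single j 1))
        ≤ ∑ _j : Fin d, (2:ℝ) := by
      apply Finset.sum_le_sum
      intro j _
      have := e1 j; have := e2 j; linarith
    have hc := cfun_self z
    have hd0 : (0:ℝ) ≤ 2*d := by positivity
    simp only [Finset.sum_const, Finset.card_univ, Fintype.card_fin, nsmul_eq_mul] at hsum2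
    nlinarith [mul_le_mul_of_nonneg_left hc hd0]
  -- off-diagonal pairing
  have Poff : ∀ (z z' : Fin d → ℤ), z ≠ z' → z ∈ S → (∀ j, z + Pi.single j 1 ∈ S) →
      (∀ j, z - Pi.single j 1 ∈ S) →
      ∑ w ∈ S, cfun z w * cfun z' w ≤ 4*(d:ℝ) := by
    intro z z' hne hz hp hm
    rw [pairing hz hp hm (cfun z')]
    by_cases hpar : Even (par z - par z')
    · -- even case: cfun z' z = 0, neighbors contribute ≤ 1 each
      have c0 : cfun z' z = 0 := cfun_eq_zero hne hpar
      have cb : ∀ (j : Fin d) (s : ℤ), Odd s → cfun z' (z + Pi.single j s) ≤ 1 := by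
        intro j s hs
        apply cfun_le_one
        intro h
        obtain ⟨k, hk⟩ := hs
        obtain ⟨r, hr⟩ := hpar
        have hpz : par (z + Pi.single j s) = par z' := by rw [h]
        rw [par_add_single] at hpz
        omega
      have hs2 : ∑ j : Fin d, (cfun z' (z + Pi.single j 1) + cfun z' (z - Pi.single j 1))
          ≤ ∑ _j : Fin d, (2:ℝ) := by
        apply Finset.sum_le_sum
        intro j _
        have a1 := cb j 1 ⟨0, by ring⟩
        have a2 : cfun z' (z - Pi.single j 1) ≤ 1 := by
          rw [sub_single]; exact cb j (-1) ⟨-1, by ring⟩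
        linarith
      simp only [Finset.sum_const, Finset.card_univ, Fintype.card_fin, nsmul_eq_mul] at hs2
      rw [c0]
      have hd1 : (1:ℝ) ≤ d := by
        have : (5:ℝ) ≤ d := by exact_mod_cast hd
        linarith
      nlinarith
    · -- odd case
      have c1 : cfun z' z ≤ 1 := cfun_le_one hne
      have ceq : ∀ (j : Fin d) (s : ℤ), Odd s →
          cfun z' (z + Pi.single j s) = (if z + Pi.single j s = z' then 2*(d:ℝ) else 0) := by
        intro j s hs
        apply cfun_even
        rw [par_add_single]
        obtain ⟨k, hk⟩ := hs
        rcases Int.even_or_odd (par z - par z') with he | ho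
        · exact absurd he hpar
        · obtain ⟨m, hm'⟩ := ho
          exact ⟨m + k + 1, by omega⟩
      have hs2 : ∑ j : Fin d, (cfun z' (z + Pi.single j 1) + cfun z' (z - Pi.single j 1))
          = 2*(d:ℝ) * ∑ j : Fin d, ((if z' = z + Pi.single j 1 then (1:ℝ) else 0) +
            (if z' = z - Pi.single j 1 then 1 else 0)) := by
        rw [Finset.mul_sum]
        apply Finset.sum_congr rfl
        intro j _
        have a1 := ceq j 1 ⟨0, by ring⟩
        have a2 : cfun z' (z - Pi.single j 1) =
            (if z - Pi.single j 1 = z' then 2*(d:ℝ) else 0) := by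
          rw [sub_single]; exact ceq j (-1) ⟨-1, by ring⟩
        have flip : ∀ a b : Fin d → ℤ,
            (if a = b then (2*(d:ℝ)) else 0) = 2*(d:ℝ) * (if b = a then (1:ℝ) else 0) := by
          intro a b
          by_cases h : a = b
          · simp [h]
          · simp [h, Ne.symm h]
        rw [a1, a2, flip, flip]
        ring
      rw [hs2]
      have hn1 := nsum_le_one z z'
      have hd0 : (0:ℝ) ≤ 2*d := by positivity
      have := mul_le_mul_of_nonneg_left hn1 hd0
      nlinarith
  -- (2) combined: sum of u^2
  have step2 : ∑ w ∈ S, (u w)^2 ≤ 12*(d:ℝ)^2 + 30*d := by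
    have expand : ∑ w ∈ S, (u w)^2 =
        (∑ w ∈ S, cfun z₁ w * cfun z₁ w) + (∑ w ∈ S, cfun z₁ w * cfun z₂ w) +
        (∑ w ∈ S, cfun z₁ w * cfun z₃ w) + (∑ w ∈ S, cfun z₂ w * cfun z₁ w) +
        (∑ w ∈ S, cfun z₂ w * cfun z₂ w) + (∑ w ∈ S, cfun z₂ w * cfun z₃ w) +
        (∑ w ∈ S, cfun z₃ w * cfun z₁ w) + (∑ w ∈ S, cfun z₃ w * cfun z₂ w) +
        (∑ w ∈ S, cfun z₃ w * cfun z₃ w) := by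
      simp only [← Finset.sum_add_distrib]
      apply Finset.sum_congr rfl
      intro w _
      simp only [hu]
      ring
    rw [expand]
    have d11 := Pdiag z₁ m1 p1 q1
    have d22 := Pdiag z₂ m2 p2 q2
    have d33 := Pdiag z₃ m3 p3 q3
    have o12 := Poff z₁ z₂ h12 m1 p1 q1
    have o13 := Poff z₁ z₃ h13 m1 p1 q1
    have o21 := Poff z₂ z₁ h12.symm m2 p2 q2
    have o23 := Poff z₂ z₃ h23 m2 p2 q2
    have o31 := Poff z₃ z₁ h13.symm m3 p3 q3
    have o32 := Poff z₃ z₂ h23.symm m3 p3 q3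
    linarith
  -- Cauchy–Schwarz and conclusion
  have cs := Finset.sum_mul_sq_le_sq_mul_sq S u (fun w => |ξ w|)
  have habs : ∑ w ∈ S, |ξ w| ^ 2 = ∑ w ∈ S, ξ w ^ 2 := by
    apply Finset.sum_congr rfl; intro w _; exact sq_abs _
  rw [habs] at cs
  have hQ : ∑ w ∈ S, ξ w ^ 2 ≤ ∑' x, ξ x ^ 2 :=
    Summable.sum_le_tsum S (fun i _ => sq_nonneg _) hsum
  have hQ0 : (0:ℝ) ≤ ∑ w ∈ S, ξ w ^ 2 := Finset.sum_nonneg fun i _ => sq_nonneg _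
  have h9 : (9:ℝ) ≤ (12*(d:ℝ)^2 + 30*d) * (∑' x, ξ x ^ 2) := by
    have l1 : (9:ℝ) ≤ (∑ w ∈ S, u w * |ξ w|)^2 := by nlinarith
    have l2 : (∑ w ∈ S, u w ^ 2) * (∑ w ∈ S, ξ w ^ 2) ≤
        (12*(d:ℝ)^2 + 30*d) * (∑' x, ξ x ^ 2) := by
      apply mul_le_mul step2 hQ hQ0
      positivity
    linarith
  have hdpos : (0:ℝ) < 4*(d:ℝ)^2 + 10*d := by
    have : (5:ℝ) ≤ d := by exact_mod_cast hd
    nlinarith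
  rw [div_le_iff₀ hdpos]
  nlinarith
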